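/- Let (G, B⁻, B⁺, σ, τ) be a tree piece with a witnessing tree decomposition with bags (X_i)_{i ∈ I} of width w. Let S ⊆ V(G) be disjoint from B⁻ ∪ B⁺. For every v ∈ S let (H_v, B⁻_v, B⁺_v, σ_v, τ_v) be a tree piece that is valid for v, with a witnessing tree decomposition of width w_v. Let G′ be obtained from G by placing the piece for v, for every v ∈ S. Then (G′, B⁻, B⁺, σ, τ) is a tree piece admitting a witnessing tree decomposition of width at most max( max_{v ∈ S} w_v, max_{i ∈ I} ( |X_i ∖ S| + Σ_{v ∈ S ∩ X_i} |B⁻_v ∪ B⁺_v| ) − 1 ). -/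

import Mathlib

/-- A finite directed multigraph. -/
structure MultiDigraph where
  V : Type
  E : Type
  [fintV : Fintype V]
  [fintE : Fintype E]
  [decV : DecidableEq V]
  src : E → V
  tgt : E → V

attribute [instance] MultiDigraph.fintV MultiDigraph.fintE MultiDigraph.decV

/-- A piece `(H, B⁻, B⁺, σ, τ)`: a directed multigraph `H`, disjoint boundary
sets `B⁻` and `B⁺`, a list `sig` of heads of the entry arcs (in `B⁻`) and a
list `tau` of tails of the exit arcs (in `B⁺`). -/
structure GraphPiece where
  H : MultiDigraph
  Bm : Finset H.V
  Bp : Finset H.V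
  sig : List H.V
  tau : List H.V
  disj : Disjoint Bm Bp
  sig_mem : ∀ x ∈ sig, x ∈ Bm
  tau_mem : ∀ x ∈ tau, x ∈ Bp

/-- A path decomposition of a directed multigraph, with bags `X 0, …, X r`. -/
def IsPD (G : MultiDigraph) {r : ℕ} (X : Fin (r + 1) → Finset G.V) : Prop :=
  (∀ v, ∃ i, v ∈ X i) ∧
  (∀ e : G.E, ∃ i, G.src e ∈ X i ∧ G.tgt e ∈ X i) ∧
  (∀ (v : G.V) (i j k : Fin (r + 1)), i ≤ j → j ≤ k → v ∈ X i → v ∈ X k → v ∈ X j)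

/-- A witnessing path decomposition of a piece: a path decomposition whose
first bag contains `B⁻` and whose last bag contains `B⁺`. -/
def IsWitPD (P : GraphPiece) {r : ℕ} (X : Fin (r + 1) → Finset P.H.V) : Prop :=
  IsPD P.H X ∧ P.Bm ⊆ X 0 ∧ P.Bp ⊆ X (Fin.last r)

/-- The placement of valid pieces `P v` for all `v ∈ S` in the multigraph `G`,
under the bijections `ein`/`eout` between arcs into (resp. out of) `v` and the
entries of `(P v).sig` (resp. `(P v).tau`).  The vertex `v` is removed, a copy
of `(P v).H` is added, and each arc is redirected to the corresponding entry
vertex. -/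
def placeAll (G : MultiDigraph) (S : Finset G.V) (P : G.V → GraphPiece)
    (ein : ∀ v ∈ S, {e : G.E // G.tgt e = v} ≃ Fin ((P v).sig.length))
    (eout : ∀ v ∈ S, {e : G.E // G.src e = v} ≃ Fin ((P v).tau.length)) :
    MultiDigraph :=
  MultiDigraph.mk
    ({x : G.V // x ∉ S} ⊕ (Σ v : {x : G.V // x ∈ S}, (P v.1).H.V))
    (G.E ⊕ (Σ v : {x : G.V // x ∈ S}, (P v.1).H.E))
    (fun e => match e with
      | Sum.inl e =>
          if h : G.src e ∈ S then
            Sum.inr ⟨⟨G.src e, h⟩, (P (G.src e)).tau.get ((eout (G.src e) h) ⟨e, rfl⟩)⟩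
          else Sum.inl ⟨G.src e, h⟩
      | Sum.inr x => Sum.inr ⟨x.1, (P x.1.1).H.src x.2⟩)
    (fun e => match e with
      | Sum.inl e =>
          if h : G.tgt e ∈ S then
            Sum.inr ⟨⟨G.tgt e, h⟩, (P (G.tgt e)).sig.get ((ein (G.tgt e) h) ⟨e, rfl⟩)⟩
          else Sum.inl ⟨G.tgt e, h⟩
      | Sum.inr x => Sum.inr ⟨x.1, (P x.1.1).H.tgt x.2⟩)

/-- A tree decomposition of a directed multigraph over the tree `T`:
every vertex is in a bag, both endpoints of every arc share a bag, and for
every vertex the nodes whose bags contain it induce a non-empty connected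
subgraph (hence a subtree when `T` is a tree). -/
def IsTD (G : MultiDigraph) {I : Type} (T : SimpleGraph I)
    (X : I → Finset G.V) : Prop :=
  (∀ v, ∃ i, v ∈ X i) ∧
  (∀ e : G.E, ∃ i, G.src e ∈ X i ∧ G.tgt e ∈ X i) ∧
  (∀ v : G.V, (T.induce {i | v ∈ X i}).Connected)

/-- A witnessing tree decomposition of a tree piece: a tree decomposition over
a tree with a bag containing `B⁻ ∪ B⁺`. -/
def IsWitTD (P : GraphPiece) {I : Type} (T : SimpleGraph I)
    (X : I → Finset P.H.V) : Prop :=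
  IsTD P.H T X ∧ ∃ i, P.Bm ∪ P.Bp ⊆ X i


open SimpleGraph

open SimpleGraph

section AuxLemmas

variable {γ δ : Type} {W : SimpleGraph δ} {G : SimpleGraph γ}

lemma exists_cross_dart_out (A : Set δ) :
    ∀ {x y : δ} (p : W.Walk x y), x ∈ A → y ∉ A →
      ∃ d ∈ p.darts, d.fst ∈ A ∧ d.snd ∉ A := by
  intro x y p
  induction p with
  | nil => intro hx hy; exact absurd hx hy
  | @cons u v w h q ih =>
    intro hx hy
    by_cases hv : v ∈ A
    · obtain ⟨d, hd, hds⟩ := ih hv hy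
      exact ⟨d, by simp [SimpleGraph.Walk.darts_cons, hd], hds⟩
    · exact ⟨⟨(u, v), h⟩, by simp [SimpleGraph.Walk.darts_cons], hx, hv⟩

lemma exists_cross_dart_in (A : Set δ) {x y : δ} (p : W.Walk x y)
    (hx : x ∉ A) (hy : y ∈ A) :
    ∃ d ∈ p.darts, d.fst ∉ A ∧ d.snd ∈ A := by
  obtain ⟨d, hd, h1, h2⟩ := exists_cross_dart_out Aᶜ p hx (by simpa using hy)
  exact ⟨d, hd, h1, by simpa using h2⟩

/-- if all crossing darts of a cycle based inside `A` have the same edge,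
then the cycle never leaves `A`. -/
lemma cycle_stays (A : Set δ) {u : δ} (p : W.Walk u u) (hc : p.IsCycle)
    (hu : u ∈ A) (e : Sym2 δ)
    (hcr : ∀ d : W.Dart, d ∈ p.darts →
      ((d.fst ∈ A ∧ d.snd ∉ A) ∨ (d.fst ∉ A ∧ d.snd ∈ A)) → d.edge = e) :
    ∀ z ∈ p.support, z ∈ A := by
  classical
  by_contra hcon
  push_neg at hcon
  obtain ⟨z, hz, hzA⟩ := hcon
  obtain ⟨d1, hd1, hm1⟩ := exists_cross_dart_out A (p.takeUntil z hz) hu hzA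
  obtain ⟨d2, hd2, hm2⟩ := exists_cross_dart_in A (p.dropUntil z hz) hzA hu
  have hd1' : d1 ∈ p.darts := p.darts_takeUntil_subset hz hd1
  have hd2' : d2 ∈ p.darts := p.darts_dropUntil_subset hz hd2
  have he1 : d1.edge = e := hcr d1 hd1' (Or.inl hm1)
  have he2 : d2.edge = e := hcr d2 hd2' (Or.inr hm2)
  have hne : d1 ≠ d2 := by
    intro h; rw [h] at hm1; exact hm2.1 hm1.1
  have hnodup : (p.darts.map SimpleGraph.Dart.edge).Nodup := by
    have := hc.isTrail.edges_nodup
    simpa [SimpleGraph.Walk.edges] using this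
  exact hne (List.inj_on_of_nodup_map hnodup hd1' hd2' (he1.trans he2.symm))

/-- lift a walk whose support lies in the range of `f` -/
lemma walk_lift (f : γ → δ) (hinj : Function.Injective f)
    (hadj : ∀ a b, W.Adj (f a) (f b) → G.Adj a b) :
    ∀ {u v : δ} (p : W.Walk u v), (∀ z ∈ p.support, z ∈ Set.range f) →
      ∃ (x y : γ) (q : G.Walk x y), u = f x ∧ v = f y ∧
        p.support = q.support.map f ∧ p.edges = q.edges.map (Sym2.map f) := by
  intro u v p
  induction p with
  | @nil u =>
    intro hs
    obtain ⟨x, hx⟩ := hs u (by simp)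
    exact ⟨x, x, SimpleGraph.Walk.nil, hx.symm, hx.symm, by simp [hx], by simp⟩
  | @cons u v w h q ih =>
    intro hs
    obtain ⟨x, hx⟩ := hs u (by simp)
    obtain ⟨x', y, q', hv, hw, hsup, hedg⟩ := ih (fun z hz => hs z (by simp [hz]))
    have hadj' : G.Adj x x' := hadj _ _ (by rw [← hx, hv] at h; exact h)
    refine ⟨x, y, SimpleGraph.Walk.cons hadj' q', hx.symm, hw, ?_, ?_⟩
    · simp [SimpleGraph.Walk.support_cons, hsup, hx]
    · simp [SimpleGraph.Walk.edges_cons, hedg, hx, hv]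

lemma cycle_lift (f : γ → δ) (hinj : Function.Injective f)
    (hadj : ∀ a b, W.Adj (f a) (f b) → G.Adj a b)
    {u : δ} (p : W.Walk u u) (hc : p.IsCycle)
    (hs : ∀ z ∈ p.support, z ∈ Set.range f) :
    ∃ (x : γ) (q : G.Walk x x), q.IsCycle := by
  obtain ⟨x, y, q, hux, huy, hsup, hedg⟩ := walk_lift f hinj hadj p hs
  have hxy : x = y := hinj (hux.symm.trans huy)
  subst hxy
  refine ⟨x, q, ?_⟩
  rw [SimpleGraph.Walk.isCycle_def] at hc ⊢
  obtain ⟨ht, hnil, hnd⟩ := hc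
  have hqt : q.edges.Nodup := List.Nodup.of_map _ (by rw [← hedg]; exact ht.edges_nodup)
  have hqnd : q.support.tail.Nodup := by
    have h2 : p.support.tail = (q.support.tail).map f := by rw [hsup, List.map_tail]
    exact List.Nodup.of_map _ (h2 ▸ hnd)
  have hqnil : q ≠ SimpleGraph.Walk.nil := by
    intro h
    subst h
    apply hnil
    simp at hsup
    cases p with
    | nil => rfl
    | cons h q => simp [SimpleGraph.Walk.support_cons] at hsup
  exact ⟨(SimpleGraph.Walk.isTrail_def _).2 hqt, hqnil, hqnd⟩

end AuxLemmas

section Glue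

variable {I : Type} (T : SimpleGraph I) {K : Type} {Iv : K → Type}
  (Tv : ∀ k, SimpleGraph (Iv k)) (att : K → I) (root : ∀ k, Iv k)

/-- adjacency within the attached trees -/
def SAdj : (Σ k, Iv k) → (Σ k, Iv k) → Prop := fun x y =>
  ∃ b : Iv x.1, y = ⟨x.1, b⟩ ∧ (Tv x.1).Adj x.2 b

/-- the gluing relation -/
def glueRel : (I ⊕ Σ k, Iv k) → (I ⊕ Σ k, Iv k) → Prop
  | .inl i, .inl j => T.Adj i j
  | .inl i, .inr z => i = att z.1 ∧ z.2 = root z.1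
  | .inr _, .inl _ => False
  | .inr z, .inr w => SAdj Tv z w

/-- the glued graph -/
def glueTree : SimpleGraph (I ⊕ Σ k, Iv k) := fromRel (glueRel T Tv att root)

lemma glue_adj_inl_inl {i j : I} :
    (glueTree T Tv att root).Adj (.inl i) (.inl j) ↔ T.Adj i j := by
  constructor
  · rintro ⟨hne, h | h⟩
    · exact h
    · exact (show T.Adj j i from h).symm
  · intro h
    exact ⟨by simpa using h.ne, Or.inl h⟩

lemma glue_adj_inl_inr {i : I} {z : Σ k, Iv k} :
    (glueTree T Tv att root).Adj (.inl i) (.inr z) ↔ (i = att z.1 ∧ z.2 = root z.1) := by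
  constructor
  · rintro ⟨hne, h | h⟩
    · exact h
    · exact absurd h id
  · intro h
    exact ⟨by simp, Or.inl h⟩

lemma glue_adj_inr_inl {i : I} {z : Σ k, Iv k} :
    (glueTree T Tv att root).Adj (.inr z) (.inl i) ↔ (i = att z.1 ∧ z.2 = root z.1) := by
  rw [adj_comm]; exact glue_adj_inl_inr T Tv att root

lemma SAdj_fst {z w : Σ k, Iv k} (h : SAdj Tv z w) : z.1 = w.1 := by
  obtain ⟨b, rfl, _⟩ := h
  rfl

lemma glue_adj_inr_fst {z w : Σ k, Iv k}
    (h : (glueTree T Tv att root).Adj (.inr z) (.inr w)) : z.1 = w.1 := by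
  obtain ⟨hne, hr | hr⟩ := h
  · exact SAdj_fst Tv hr
  · exact (SAdj_fst Tv hr).symm

lemma glue_adj_inr_of_adj {k : K} {a b : Iv k} (h : (Tv k).Adj a b) :
    (glueTree T Tv att root).Adj (.inr ⟨k, a⟩) (.inr ⟨k, b⟩) := by
  refine ⟨fun hc => ?_, Or.inl ⟨b, rfl, h⟩⟩
  exact h.ne (eq_of_heq (Sigma.ext_iff.1 (Sum.inr.inj hc)).2)

lemma SAdj_same {k : K} {a b : Iv k} (h : SAdj Tv (⟨k, a⟩ : Σ k, Iv k) ⟨k, b⟩) :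
    (Tv k).Adj a b := by
  obtain ⟨b', h1, hadj⟩ := h
  have hb : b = b' := eq_of_heq (Sigma.ext_iff.1 h1).2
  rw [hb]
  exact hadj

lemma glue_adj_inr_same {k : K} {a b : Iv k}
    (h : (glueTree T Tv att root).Adj (.inr ⟨k, a⟩) (.inr ⟨k, b⟩)) : (Tv k).Adj a b := by
  obtain ⟨hne, hr | hr⟩ := h
  · exact SAdj_same Tv hr
  · exact (SAdj_same Tv hr).symm

/-- the inclusion of the base tree -/
def glueHomL : T →g glueTree T Tv att root :=
  ⟨Sum.inl, fun h => (glue_adj_inl_inl T Tv att root).2 h⟩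

/-- the inclusion of an attached tree -/
def glueHomR (k : K) : Tv k →g glueTree T Tv att root :=
  ⟨fun a => Sum.inr ⟨k, a⟩, fun h => glue_adj_inr_of_adj T Tv att root h⟩

end Glue
section GlueTree

variable {I : Type} {T : SimpleGraph I} {K : Type} {Iv : K → Type}
  {Tv : ∀ k, SimpleGraph (Iv k)} (att : K → I) (root : ∀ k, Iv k)

theorem glueTree_isTree (hT : T.IsTree) (hTv : ∀ k, (Tv k).IsTree) :
    (glueTree T Tv att root).IsTree := by
  classical
  constructor
  · -- connected
    have hre : ∀ x, ∃ i : I, (glueTree T Tv att root).Reachable x (Sum.inl i) := by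
      rintro (i | ⟨k, a⟩)
      · exact ⟨i, Reachable.refl _⟩
      · refine ⟨att k, ?_⟩
        have h1 : (glueTree T Tv att root).Reachable (Sum.inr ⟨k, a⟩) (Sum.inr ⟨k, root k⟩) :=
          Reachable.map (glueHomR T Tv att root k)
            ((hTv k).isConnected.preconnected a (root k))
        exact h1.trans ((glue_adj_inr_inl T Tv att root).2 ⟨rfl, rfl⟩).reachable
    rw [connected_iff]
    refine ⟨?_, ⟨Sum.inl hT.isConnected.nonempty.some⟩⟩
    · intro x y
      obtain ⟨i, hi⟩ := hre x
      obtain ⟨j, hj⟩ := hre y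
      have hij : (glueTree T Tv att root).Reachable (Sum.inl i) (Sum.inl j) :=
        Reachable.map (glueHomL T Tv att root) (hT.isConnected.preconnected i j)
      exact (hi.trans hij).trans hj.symm
  · -- acyclic
    intro u p hp
    rcases Classical.em (∀ z ∈ p.support, z ∈ Set.range (Sum.inl : I → I ⊕ Σ k, Iv k)) with hall | hall
    · obtain ⟨x, q, hq⟩ := cycle_lift Sum.inl Sum.inl_injective
        (fun a b h => (glue_adj_inl_inl T Tv att root).1 h) p hp hall
      exact hT.IsAcyclic q hq
    · push_neg at hall
      obtain ⟨z, hz, hznot⟩ := hall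
      obtain ⟨k, a, rfl⟩ : ∃ (k : K) (a : Iv k), z = Sum.inr ⟨k, a⟩ := by
        rcases z with i | ⟨k, a⟩
        · exact absurd ⟨i, rfl⟩ hznot
        · exact ⟨k, a, rfl⟩
      set p' := p.rotate _ hz with hp'def
      have hp' : p'.IsCycle := hp.rotate hz
      set A : Set (I ⊕ Σ k, Iv k) := {x | ∃ b : Iv k, x = Sum.inr ⟨k, b⟩} with hA
      have hbase : (Sum.inr ⟨k, a⟩ : I ⊕ Σ k, Iv k) ∈ A := ⟨a, rfl⟩
      rcases Classical.em (∀ w ∈ p'.support, w ∈ A) with h2 | h2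
      · -- entirely inside one attached tree
        have hinj : Function.Injective (fun b : Iv k => (Sum.inr ⟨k, b⟩ : I ⊕ Σ k, Iv k)) := by
          intro a b h
          exact eq_of_heq (Sigma.ext_iff.1 (Sum.inr.inj h)).2
        obtain ⟨x, q, hq⟩ := cycle_lift (fun b : Iv k => (Sum.inr ⟨k, b⟩ : I ⊕ Σ k, Iv k))
          hinj (fun a b h => glue_adj_inr_same T Tv att root h) p' hp'
          (fun w hw => by obtain ⟨b, hb⟩ := h2 w hw; exact ⟨b, hb.symm⟩)
        exact (hTv k).IsAcyclic q hq
      · push_neg at h2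
        obtain ⟨w, hw, hwA⟩ := h2
        apply hwA
        refine cycle_stays A p' hp' hbase
          (s(Sum.inl (att k), Sum.inr ⟨k, root k⟩)) ?_ w hw
        intro d hd hside
        have hedge : d.edge = s(d.fst, d.snd) := rfl
        have hadj := d.adj
        rcases hside with ⟨⟨b, hb⟩, hout⟩ | ⟨hout, ⟨b, hb⟩⟩
        · -- leaving the attached tree
          rcases hsnd : d.snd with i | ⟨k2, b2⟩
          · rw [hb, hsnd] at hadj
            obtain ⟨hi, hr⟩ := (glue_adj_inr_inl T Tv att root).1 hadj
            have hi' : i = att k := hi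
            have hr' : b = root k := hr
            rw [hedge, hb, hsnd, hi', hr', Sym2.eq_swap]
          · exfalso
            rw [hb, hsnd] at hadj
            have hk : k = k2 := glue_adj_inr_fst T Tv att root hadj
            subst hk
            exact hout ⟨b2, hsnd⟩
        · -- entering the attached tree
          rcases hfstc : d.fst with i | ⟨k2, b2⟩
          · rw [hb, hfstc] at hadj
            obtain ⟨hi, hr⟩ := (glue_adj_inl_inr T Tv att root).1 hadj
            have hi' : i = att k := hi
            have hr' : b = root k := hr
            rw [hedge, hb, hfstc, hi', hr']
          · exfalso
            rw [hb, hfstc] at hadj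
            have hk : k2 = k := glue_adj_inr_fst T Tv att root hadj
            subst hk
            exact hout ⟨b2, hfstc⟩

end GlueTree
section Bags

variable (G0 : MultiDigraph) (S : Finset G0.V) (P : G0.V → GraphPiece)

/-- the bag replacing the original bag `Xi` -/
def bagL (Xi : Finset G0.V) :
    Finset ({x : G0.V // x ∉ S} ⊕ Σ v : {x : G0.V // x ∈ S}, (P v.1).H.V) :=
  ((Xi.filter (· ∉ S)).attach).image
      (fun x => Sum.inl ⟨x.1, by have h := x.2; rw [Finset.mem_filter] at h; exact h.2⟩) ∪
  ((Xi.filter (· ∈ S)).attach).biUnion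
      (fun x => ((P x.1).Bm ∪ (P x.1).Bp).image
        (fun y => Sum.inr ⟨⟨x.1, by have h := x.2; rw [Finset.mem_filter] at h; exact h.2⟩, y⟩))

/-- the bags inside the attached decompositions -/
def bagR (v : {x : G0.V // x ∈ S}) (s : Finset (P v.1).H.V) :
    Finset ({x : G0.V // x ∉ S} ⊕ Σ v : {x : G0.V // x ∈ S}, (P v.1).H.V) :=
  s.image (fun y => Sum.inr ⟨v, y⟩)

variable {G0 S P}

lemma mem_bagL_inl {Xi : Finset G0.V} (x : {a : G0.V // a ∉ S}) :
    (Sum.inl x ∈ bagL G0 S P Xi) ↔ x.1 ∈ Xi := by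
  unfold bagL
  constructor
  · intro h
    rcases Finset.mem_union.1 h with h | h
    · obtain ⟨y, hy, heq⟩ := Finset.mem_image.1 h
      have : y.1 = x.1 := congrArg Subtype.val (Sum.inl.inj heq)
      rw [← this]
      exact (Finset.mem_filter.1 y.2).1
    · obtain ⟨z, _, hz⟩ := Finset.mem_biUnion.1 h
      obtain ⟨y, _, heq⟩ := Finset.mem_image.1 hz
      exact absurd heq (by simp)
  · intro h
    apply Finset.mem_union_left
    have hx : x.1 ∈ Xi.filter (· ∉ S) := Finset.mem_filter.2 ⟨h, x.2⟩
    refine Finset.mem_image.2 ⟨⟨x.1, hx⟩, Finset.mem_attach _ _, ?_⟩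
    exact congrArg Sum.inl (Subtype.ext rfl)

lemma mem_bagL_inr {Xi : Finset G0.V} (v : {x : G0.V // x ∈ S}) (y : (P v.1).H.V) :
    ((Sum.inr ⟨v, y⟩ : {x : G0.V // x ∉ S} ⊕ Σ v : {x : G0.V // x ∈ S}, (P v.1).H.V)
      ∈ bagL G0 S P Xi) ↔ (v.1 ∈ Xi ∧ y ∈ (P v.1).Bm ∪ (P v.1).Bp) := by
  unfold bagL
  constructor
  · intro h
    rcases Finset.mem_union.1 h with h | h
    · obtain ⟨z, _, heq⟩ := Finset.mem_image.1 h
      exact absurd heq (by simp)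
    · obtain ⟨z, hzmem, hz⟩ := Finset.mem_biUnion.1 h
      obtain ⟨y', hy', heq⟩ := Finset.mem_image.1 hz
      obtain ⟨h1, h2⟩ := Sigma.ext_iff.1 (Sum.inr.inj heq)
      subst h1
      have : y' = y := eq_of_heq h2
      subst this
      exact ⟨(Finset.mem_filter.1 z.2).1, hy'⟩
  · rintro ⟨h1, h2⟩
    apply Finset.mem_union_right
    have hv : v.1 ∈ Xi.filter (· ∈ S) := Finset.mem_filter.2 ⟨h1, v.2⟩
    refine Finset.mem_biUnion.2 ⟨⟨v.1, hv⟩, Finset.mem_attach _ _, ?_⟩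
    refine Finset.mem_image.2 ⟨y, h2, ?_⟩
    congr 1

lemma bagL_card (Xi : Finset G0.V) :
    (bagL G0 S P Xi).card ≤
      (Xi.filter (· ∉ S)).card +
        (Xi.filter (· ∈ S)).sum (fun v => ((P v).Bm ∪ (P v).Bp).card) := by
  unfold bagL
  refine (Finset.card_union_le _ _).trans (Nat.add_le_add ?_ ?_)
  · exact (Finset.card_image_le).trans (le_of_eq Finset.card_attach)
  · refine (Finset.card_biUnion_le).trans ?_
    rw [← Finset.sum_attach (Xi.filter (· ∈ S))
      (fun v => ((P v).Bm ∪ (P v).Bp).card)]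
    exact Finset.sum_le_sum (fun x _ => Finset.card_image_le)

lemma mem_bagR_elim {v : {x : G0.V // x ∈ S}} {s : Finset (P v.1).H.V}
    {z : {x : G0.V // x ∉ S} ⊕ Σ v : {x : G0.V // x ∈ S}, (P v.1).H.V}
    (h : z ∈ bagR G0 S P v s) : ∃ y ∈ s, z = Sum.inr ⟨v, y⟩ := by
  unfold bagR at h
  obtain ⟨y, hy, heq⟩ := Finset.mem_image.1 h
  exact ⟨y, hy, heq.symm⟩

lemma mem_bagR_same {v : {x : G0.V // x ∈ S}} {s : Finset (P v.1).H.V} (y : (P v.1).H.V) :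
    ((Sum.inr ⟨v, y⟩ : {x : G0.V // x ∉ S} ⊕ Σ v : {x : G0.V // x ∈ S}, (P v.1).H.V)
      ∈ bagR G0 S P v s) ↔ y ∈ s := by
  unfold bagR
  constructor
  · intro h
    obtain ⟨y', hy', heq⟩ := mem_bagR_elim h
    obtain ⟨-, h2⟩ := Sigma.ext_iff.1 (Sum.inr.inj heq.symm)
    have hyy : y' = y := eq_of_heq h2
    exact hyy ▸ hy'
  · intro h
    exact Finset.mem_image.2 ⟨y, h, rfl⟩


lemma bagR_card {v : {x : G0.V // x ∈ S}} (s : Finset (P v.1).H.V) :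
    (bagR G0 S P v s).card ≤ s.card := Finset.card_image_le

end Bags
section InduceHelpers

variable {γ δ : Type} {G : SimpleGraph γ} {W : SimpleGraph δ}

/-- a homomorphism between induced subgraphs -/
def induceHomAux (f : γ → δ) (A : Set γ) (B : Set δ)
    (hadj : ∀ a b, a ∈ A → b ∈ A → G.Adj a b → W.Adj (f a) (f b))
    (hAB : ∀ a ∈ A, f a ∈ B) : (G.induce A) →g (W.induce B) where
  toFun := fun x => ⟨f x.1, hAB x.1 x.2⟩
  map_rel' := fun {x y} h => hadj x.1 y.1 x.2 y.2 h

lemma connected_induce_of_surj (f : γ → δ) (A : Set γ) (B : Set δ)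
    (hadj : ∀ a b, G.Adj a b → W.Adj (f a) (f b))
    (hAB : ∀ a ∈ A, f a ∈ B) (hsurj : ∀ b ∈ B, ∃ a ∈ A, f a = b)
    (hc : (G.induce A).Connected) : (W.induce B).Connected := by
  apply SimpleGraph.Connected.map (induceHomAux f A B (fun a b _ _ h => hadj a b h) hAB) ?_ hc
  rintro ⟨b, hb⟩
  obtain ⟨a, ha, rfl⟩ := hsurj b hb
  exact ⟨⟨a, ha⟩, rfl⟩

end InduceHelpers

section PlaceAllLemmas

variable (G0 : MultiDigraph) (S : Finset G0.V) (P : G0.V → GraphPiece)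
    (ein : ∀ v ∈ S, {e : G0.E // G0.tgt e = v} ≃ Fin ((P v).sig.length))
    (eout : ∀ v ∈ S, {e : G0.E // G0.src e = v} ≃ Fin ((P v).tau.length))

lemma placeAll_src_inl (e : G0.E) :
    (placeAll G0 S P ein eout).src (Sum.inl e) =
      if h : G0.src e ∈ S then
        Sum.inr ⟨⟨G0.src e, h⟩, (P (G0.src e)).tau.get ((eout (G0.src e) h) ⟨e, rfl⟩)⟩
      else Sum.inl ⟨G0.src e, h⟩ := rfl

lemma placeAll_tgt_inl (e : G0.E) :
    (placeAll G0 S P ein eout).tgt (Sum.inl e) =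
      if h : G0.tgt e ∈ S then
        Sum.inr ⟨⟨G0.tgt e, h⟩, (P (G0.tgt e)).sig.get ((ein (G0.tgt e) h) ⟨e, rfl⟩)⟩
      else Sum.inl ⟨G0.tgt e, h⟩ := rfl

lemma placeAll_src_inr (z : Σ v : {x : G0.V // x ∈ S}, (P v.1).H.E) :
    (placeAll G0 S P ein eout).src (Sum.inr z) = Sum.inr ⟨z.1, (P z.1.1).H.src z.2⟩ := rfl

lemma placeAll_tgt_inr (z : Σ v : {x : G0.V // x ∈ S}, (P v.1).H.E) :
    (placeAll G0 S P ein eout).tgt (Sum.inr z) = Sum.inr ⟨z.1, (P z.1.1).H.tgt z.2⟩ := rfl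

end PlaceAllLemmas

/-- Lemma 2.5 (puzzle lemma for tree decompositions). -/
theorem place_pieces_treewidth (PG : GraphPiece)
    {I : Type} [Fintype I] (T : SimpleGraph I) (hT : T.IsTree)
    (X : I → Finset PG.H.V) (hX : IsWitTD PG T X)
    (w : ℕ) (hw : ∀ i, (X i).card ≤ w + 1)
    (S : Finset PG.H.V)
    (hS : ∀ v ∈ S, v ∉ PG.Bm ∧ v ∉ PG.Bp)
    (P : PG.H.V → GraphPiece)
    (ein : ∀ v ∈ S, {e : PG.H.E // PG.H.tgt e = v} ≃ Fin ((P v).sig.length))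
    (eout : ∀ v ∈ S, {e : PG.H.E // PG.H.src e = v} ≃ Fin ((P v).tau.length))
    (wv : PG.H.V → ℕ)
    (hPv : ∀ v ∈ S, ∃ (I' : Type) (_ : Fintype I') (T' : SimpleGraph I')
      (X' : I' → Finset (P v).H.V),
      T'.IsTree ∧ IsWitTD (P v) T' X' ∧ ∀ i, (X' i).card ≤ wv v + 1) :
    ∃ (I' : Type) (_ : Fintype I') (T' : SimpleGraph I')
      (X' : I' → Finset (placeAll PG.H S P ein eout).V),
      T'.IsTree ∧
      IsTD (placeAll PG.H S P ein eout) T' X' ∧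
      (∃ i, (∀ v (h : v ∉ S), v ∈ PG.Bm → Sum.inl ⟨v, h⟩ ∈ X' i) ∧
            (∀ v (h : v ∉ S), v ∈ PG.Bp → Sum.inl ⟨v, h⟩ ∈ X' i)) ∧
      (∀ i, (X' i).card ≤
        max
          (S.sup wv)
          ((Finset.univ.sup fun i : I =>
            ((X i).filter (· ∉ S)).card +
            (((X i).filter (· ∈ S)).sum fun v =>
              ((P v).Bm ∪ (P v).Bp).card)) - 1) + 1) := by
  classical
  obtain ⟨⟨hvert, hedg, hconn⟩, i0, hi0⟩ := hX
  have hch : ∀ v : {x : PG.H.V // x ∈ S}, ∃ (I' : Type), ∃ (_ : Fintype I'),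
      ∃ (T' : SimpleGraph I'), ∃ (X' : I' → Finset (P v.1).H.V),
      T'.IsTree ∧ IsWitTD (P v.1) T' X' ∧ ∀ i, (X' i).card ≤ wv v.1 + 1 :=
    fun v => hPv v.1 v.2
  choose Iv instIv Tv Xv htree hwit hbound using hch
  haveI : ∀ v, Fintype (Iv v) := instIv
  choose att hatt using fun v : {x : PG.H.V // x ∈ S} => hvert v.1
  choose root hroot using fun v : {x : PG.H.V // x ∈ S} => (hwit v).2
  have hvertv : ∀ v (y : (P v.1).H.V), ∃ a, y ∈ Xv v a := fun v => (hwit v).1.1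
  have hedgev : ∀ v (e : (P v.1).H.E),
      ∃ a, (P v.1).H.src e ∈ Xv v a ∧ (P v.1).H.tgt e ∈ Xv v a := fun v => (hwit v).1.2.1
  have hconnv : ∀ v y, ((Tv v).induce {a | y ∈ Xv v a}).Connected := fun v => (hwit v).1.2.2
  let XX : (I ⊕ Σ v : {x : PG.H.V // x ∈ S}, Iv v) →
      Finset ((placeAll PG.H S P ein eout).V) := fun j => match j with
    | Sum.inl i => bagL PG.H S P (X i)
    | Sum.inr z => bagR PG.H S P z.1 (Xv z.1 z.2)
  refine ⟨(I ⊕ Σ v : {x : PG.H.V // x ∈ S}, Iv v), inferInstance, glueTree T Tv att root, XX,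
    glueTree_isTree att root hT htree,
    ⟨?_, ?_, ?_⟩, ⟨Sum.inl i0, ?_, ?_⟩, ?_⟩
  · -- every vertex in some bag
    intro vv
    rcases vv with x | ⟨v, y⟩
    · obtain ⟨i, hi⟩ := hvert x.1
      exact ⟨Sum.inl i, (mem_bagL_inl x).2 hi⟩
    · obtain ⟨a, ha⟩ := hvertv v y
      exact ⟨Sum.inr ⟨v, a⟩, (mem_bagR_same y).2 ha⟩
  · -- every edge in some bag
    intro e
    rcases e with e | ⟨v, e⟩
    · obtain ⟨i, hs, ht⟩ := hedg e
      refine ⟨Sum.inl i, ?_, ?_⟩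
      · rw [placeAll_src_inl]
        split_ifs with h
        · exact (mem_bagL_inr _ _).2 ⟨hs, Finset.mem_union_right _
            ((P _).tau_mem _ (List.get_mem _ _))⟩
        · exact (mem_bagL_inl _).2 hs
      · rw [placeAll_tgt_inl]
        split_ifs with h
        · exact (mem_bagL_inr _ _).2 ⟨ht, Finset.mem_union_left _
            ((P _).sig_mem _ (List.get_mem _ _))⟩
        · exact (mem_bagL_inl _).2 ht
    · obtain ⟨a, h1, h2⟩ := hedgev v e
      exact ⟨Sum.inr ⟨v, a⟩, (mem_bagR_same _).2 h1, (mem_bagR_same _).2 h2⟩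
  · -- induced subgraphs connected
    intro vv
    rcases vv with x | ⟨v, y⟩
    · refine connected_induce_of_surj Sum.inl {i | x.1 ∈ X i} _
        (fun a b h => (glue_adj_inl_inl T Tv att root).2 h)
        (fun i hi => (mem_bagL_inl x).2 hi) ?_ (hconn x.1)
      rintro (i | z) hb
      · exact ⟨i, (mem_bagL_inl x).1 hb, rfl⟩
      · obtain ⟨y, -, heq⟩ := mem_bagR_elim hb
        exact absurd heq (by simp)
    · rcases Classical.em (y ∈ (P v.1).Bm ∪ (P v.1).Bp) with hy | hy
      · -- boundary vertex of a piece: bags in both parts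
        set N := {j | (Sum.inr ⟨v, y⟩ :
            {x : PG.H.V // x ∉ S} ⊕ Σ v : {x : PG.H.V // x ∈ S}, (P v.1).H.V) ∈ XX j} with hN
        have hattN : Sum.inl (att v) ∈ N := (mem_bagL_inr v y).2 ⟨hatt v, hy⟩
        have hrootN : Sum.inr ⟨v, root v⟩ ∈ N := (mem_bagR_same y).2 (hroot v hy)
        let f1 := induceHomAux (G := T) (W := glueTree T Tv att root)
          Sum.inl {i | v.1 ∈ X i} N
          (fun a b _ _ h => (glue_adj_inl_inl T Tv att root).2 h)
          (fun i hi => (mem_bagL_inr v y).2 ⟨hi, hy⟩)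
        let f2 := induceHomAux (G := Tv v) (W := glueTree T Tv att root)
          (fun a => Sum.inr ⟨v, a⟩) {a | y ∈ Xv v a} N
          (fun a b _ _ h => glue_adj_inr_of_adj T Tv att root h)
          (fun a ha => (mem_bagR_same y).2 ha)
        have key : ∀ z : {j // j ∈ N},
            ((glueTree T Tv att root).induce N).Reachable z ⟨Sum.inl (att v), hattN⟩ := by
          rintro ⟨j, hj⟩
          rcases j with i | ⟨w, b⟩
          · have hi : v.1 ∈ X i := ((mem_bagL_inr v y).1 hj).1
            exact SimpleGraph.Reachable.map f1
              ((hconn v.1).preconnected ⟨i, hi⟩ ⟨att v, hatt v⟩)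
          · obtain ⟨y', hy', heq⟩ := mem_bagR_elim hj
            obtain ⟨h1, h2⟩ := Sigma.ext_iff.1 (Sum.inr.inj heq)
            subst h1
            have hyy : y = y' := eq_of_heq h2
            subst hyy
            have reach1 : ((glueTree T Tv att root).induce N).Reachable
                ⟨Sum.inr ⟨v, b⟩, hj⟩ ⟨Sum.inr ⟨v, root v⟩, hrootN⟩ :=
              SimpleGraph.Reachable.map f2
                ((hconnv v y).preconnected ⟨b, hy'⟩ ⟨root v, hroot v hy⟩)
            have hadj2 : ((glueTree T Tv att root).induce N).Adj
                ⟨Sum.inr ⟨v, root v⟩, hrootN⟩ ⟨Sum.inl (att v), hattN⟩ :=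
              (glue_adj_inr_inl T Tv att root).2 ⟨rfl, rfl⟩
            exact reach1.trans hadj2.reachable
        rw [SimpleGraph.connected_iff]
        exact ⟨fun z1 z2 => (key z1).trans (key z2).symm, ⟨⟨Sum.inl (att v), hattN⟩⟩⟩
      · -- interior vertex of a piece
        refine connected_induce_of_surj
          (fun a : Iv v => (Sum.inr ⟨v, a⟩ : I ⊕ Σ v : {x : PG.H.V // x ∈ S}, Iv v))
          {a | y ∈ Xv v a}
          {j | (Sum.inr ⟨v, y⟩ :
            {x : PG.H.V // x ∉ S} ⊕ Σ v : {x : PG.H.V // x ∈ S}, (P v.1).H.V) ∈ XX j}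
          (fun a b h => glue_adj_inr_of_adj T Tv att root h)
          (fun a ha => (mem_bagR_same y).2 ha) ?_ (hconnv v y)
        rintro (i | ⟨w, b⟩) hb
        · exact absurd ((mem_bagL_inr v y).1 hb).2 hy
        · obtain ⟨y', hy', heq⟩ := mem_bagR_elim hb
          obtain ⟨h1, h2⟩ := Sigma.ext_iff.1 (Sum.inr.inj heq)
          subst h1
          have hyy : y = y' := eq_of_heq h2
          subst hyy
          exact ⟨b, hy', rfl⟩
  · -- B⁻ in the distinguished bag
    intro v h hv
    exact (mem_bagL_inl ⟨v, h⟩).2 (hi0 (Finset.mem_union_left _ hv))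
  · -- B⁺ in the distinguished bag
    intro v h hv
    exact (mem_bagL_inl ⟨v, h⟩).2 (hi0 (Finset.mem_union_right _ hv))
  · -- width bound
    intro j
    rcases j with i | ⟨v, a⟩
    · have h1 := bagL_card (G0 := PG.H) (S := S) (P := P) (X i)
      have h2 : ((X i).filter (· ∉ S)).card +
          ((X i).filter (· ∈ S)).sum (fun v => ((P v).Bm ∪ (P v).Bp).card) ≤
          (Finset.univ.sup fun i : I =>
            ((X i).filter (· ∉ S)).card +
            (((X i).filter (· ∈ S)).sum fun v => ((P v).Bm ∪ (P v).Bp).card)) :=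
        Finset.le_sup (f := fun i : I => ((X i).filter (· ∉ S)).card +
            (((X i).filter (· ∈ S)).sum fun v => ((P v).Bm ∪ (P v).Bp).card))
          (Finset.mem_univ i)
      have h3 := h1.trans h2
      refine h3.trans ?_
      have h4 : ∀ n : ℕ, n ≤ (n - 1) + 1 := fun n => by omega
      exact (h4 _).trans (Nat.succ_le_succ (le_max_right _ _))
    · refine (bagR_card _).trans ((hbound v a).trans ?_)
      exact Nat.succ_le_succ ((Finset.le_sup v.2).trans (le_max_left _ _))
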